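/- Let μ be upper doubling with dominating function λ on a metric space. Let B = B(c_B, r_B) be a ball and R_B ∈ [r_B, 1.2 r_B]. Fix x ∈ B(c_B, R_B) and set h = R_B − d(x, c_B) > 0. Then ∫_{B(c_B, 3r_B) ∖ B(c_B, R_B)} min(1/λ(x, d(x,y)), 1/λ(y, d(x,y))) dμ(y) ≤ C · log(10 r_B / h), where C depends only on C_λ. -/

import Mathlib

open MeasureTheory Metric

/-- Dyadic localization: if `h ≤ d < 2^N h`, there is `k < N` with
`2^k h ≤ d < 2^(k+1) h`. -/
lemma stmt3_aux_pow {h d : ℝ} (hh : 0 < h) (h1 : h ≤ d) {N : ℕ}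
    (h2 : d < 2 ^ N * h) : ∃ k < N, 2 ^ k * h ≤ d ∧ d < 2 ^ (k + 1) * h := by
  have hd : 0 < d := hh.trans_le h1
  set t : ℝ := d / h with ht
  have ht1 : 1 ≤ t := (one_le_div hh).2 h1
  have htpos : 0 < t := lt_of_lt_of_le one_pos ht1
  have htN : t < 2 ^ N := (div_lt_iff₀ hh).2 h2
  set k : ℕ := ⌊Real.logb 2 t⌋₊ with hk
  have hlogb0 : 0 ≤ Real.logb 2 t := Real.logb_nonneg one_lt_two ht1
  have hk1 : (2 : ℝ) ^ k ≤ t := by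
    have : (2 : ℝ) ^ (k : ℝ) ≤ 2 ^ Real.logb 2 t :=
      Real.rpow_le_rpow_of_exponent_le one_le_two (Nat.floor_le hlogb0)
    rwa [Real.rpow_natCast, Real.rpow_logb two_pos (by norm_num) htpos] at this
  have hk2 : t < (2 : ℝ) ^ (k + 1) := by
    have h3 : Real.logb 2 t < (k : ℝ) + 1 := Nat.lt_floor_add_one _
    have : (2 : ℝ) ^ Real.logb 2 t < 2 ^ ((k : ℝ) + 1) :=
      Real.rpow_lt_rpow_of_exponent_lt one_lt_two h3
    rw [Real.rpow_logb two_pos (by norm_num) htpos] at this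
    calc t < 2 ^ ((k : ℝ) + 1) := this
    _ = 2 ^ (k + 1) := by
        rw [← Real.rpow_natCast 2 (k + 1)]; norm_num
  have hkN : k < N := by
    have : (2 : ℝ) ^ k < 2 ^ N := lt_of_le_of_lt hk1 htN
    exact (pow_lt_pow_iff_right₀ (by norm_num : (1:ℝ) < 2)).1 this
  exact ⟨k, hkN, (le_div_iff₀ hh).1 hk1, (div_lt_iff₀ hh).1 hk2⟩

/-- For `μ` upper doubling with dominating function `lam`, a ball `B(c,r)`,
`R ∈ [r, 1.2 r]`, and `x ∈ B(c,R)` with `h = R − d(x,c) > 0`, one has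
`∫_{B(c,3r) ∖ B(c,R)} min(1/lam x (d(x,y)), 1/lam y (d(x,y))) dμ(y) ≤ C log(10 r / h)`,
with `C` depending only on `Cl`. -/
theorem stmt3 (Cl : ℝ) (hCl : 1 ≤ Cl) :
    ∃ C : ℝ, 0 < C ∧
      ∀ (X : Type) [MeasurableSpace X] [MetricSpace X] (μ : Measure X)
        (lam : X → ℝ → ℝ),
        (∀ x r, 0 < r → 0 < lam x r) →
        (∀ x r s, 0 < r → r ≤ s → lam x r ≤ lam x s) →
        (∀ x r, 0 < r → lam x (2 * r) ≤ Cl * lam x r) →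
        (∀ x r, 0 < r → μ (ball x r) ≤ ENNReal.ofReal (lam x r)) →
        ∀ (c : X) (r R : ℝ) (x : X), 0 < r → r ≤ R → R ≤ 1.2 * r →
          x ∈ ball c R →
          ∫⁻ y in ball c (3 * r) \ ball c R,
              ENNReal.ofReal (min (1 / lam x (dist x y)) (1 / lam y (dist x y))) ∂μ ≤
            ENNReal.ofReal (C * Real.log (10 * r / (R - dist x c))) := by
  have hlog2 : 0 < Real.log 2 := Real.log_pos one_lt_two
  refine ⟨Cl * (1 / Real.log 2 + 1), by positivity, ?_⟩
  intro X _ _ μ lam hpos hmono hdoub hdom c r R x hr hrR hR12 hx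
  set h : ℝ := R - dist x c with hh_def
  have hxc : dist x c < R := mem_ball.1 hx
  have hh : 0 < h := sub_pos.2 hxc
  have hhR : h ≤ R := by
    have := dist_nonneg (x := x) (y := c); simp only [hh_def]; linarith
  have hRr : R ≤ 1.2 * r := hR12
  have hh5r : h < 5 * r := by nlinarith
  -- ratio t0 = 5r/h > 4
  have ht0 : (4 : ℝ) < 5 * r / h := by
    rw [lt_div_iff₀ hh]; nlinarith
  set N : ℕ := ⌈Real.logb 2 (5 * r / h)⌉₊ with hN_def
  have ht0pos : 0 < 5 * r / h := by positivity
  have h5rN : 5 * r ≤ 2 ^ N * h := by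
    have h1 : Real.logb 2 (5 * r / h) ≤ (N : ℝ) := Nat.le_ceil _
    have h2 : 5 * r / h ≤ (2 : ℝ) ^ N := by
      have : (2 : ℝ) ^ Real.logb 2 (5 * r / h) ≤ 2 ^ (N : ℝ) :=
        Real.rpow_le_rpow_of_exponent_le one_le_two h1
      rwa [Real.rpow_logb two_pos (by norm_num) ht0pos, Real.rpow_natCast] at this
    exact (div_le_iff₀ hh).1 h2
  -- annuli
  set A : ℕ → Set X := fun k => ball x (2 ^ (k + 1) * h) \ ball x (2 ^ k * h) with hA
  set S : Set X := ball c (3 * r) \ ball c R with hS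
  -- distance facts on S
  have hdist : ∀ y ∈ S, h ≤ dist x y ∧ dist x y < 5 * r := by
    intro y hy
    obtain ⟨hy1, hy2⟩ := hy
    have hyc : R ≤ dist y c := le_of_not_gt (fun hlt => hy2 (mem_ball.2 hlt))
    have ht1 := dist_triangle y x c
    have ht2 := dist_triangle x c y
    have hcm : dist x y = dist y x := dist_comm x y
    have hyc3 : dist c y < 3 * r := mem_ball'.1 hy1
    constructor
    · simp only [hh_def]; linarith
    · linarith
  -- cover
  have hcover : S ⊆ ⋃ k : Fin N, A k := by
    intro y hy
    obtain ⟨hd1, hd2⟩ := hdist y hy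
    have hd2' : dist x y < 2 ^ N * h := lt_of_lt_of_le hd2 h5rN
    obtain ⟨k, hkN, hk1, hk2⟩ := stmt3_aux_pow hh hd1 hd2'
    refine Set.mem_iUnion.2 ⟨⟨k, hkN⟩, ?_, ?_⟩
    · exact mem_ball.2 (by rw [dist_comm]; exact hk2)
    · intro hmem
      exact absurd (mem_ball'.1 hmem) (not_lt.2 hk1)
  -- per-annulus bound
  have hterm : ∀ k : ℕ,
      ∫⁻ y in A k, ENNReal.ofReal (min (1 / lam x (dist x y)) (1 / lam y (dist x y))) ∂μ ≤
        ENNReal.ofReal Cl := by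
    intro k
    have hrk : (0 : ℝ) < 2 ^ k * h := by positivity
    set L : ℝ := lam x (2 ^ k * h) with hL
    have hLpos : 0 < L := hpos x _ hrk
    have hpt : ∀ y ∈ A k,
        ENNReal.ofReal (min (1 / lam x (dist x y)) (1 / lam y (dist x y))) ≤
          ENNReal.ofReal (1 / L) := by
      intro y hy
      obtain ⟨_, hy2⟩ := hy
      have hd : 2 ^ k * h ≤ dist x y := by
        have := not_lt.1 (fun hlt => hy2 (mem_ball.2 hlt))
        rwa [dist_comm] at this
      have hmono' : L ≤ lam x (dist x y) := hmono x _ _ hrk hd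
      have h1 : min (1 / lam x (dist x y)) (1 / lam y (dist x y)) ≤ 1 / L :=
        le_trans (min_le_left _ _) (one_div_le_one_div_of_le hLpos hmono')
      exact ENNReal.ofReal_le_ofReal h1
    calc ∫⁻ y in A k, ENNReal.ofReal (min (1 / lam x (dist x y)) (1 / lam y (dist x y))) ∂μ
        ≤ ∫⁻ _ in A k, ENNReal.ofReal (1 / L) ∂μ :=
          setLIntegral_mono measurable_const hpt
      _ = ENNReal.ofReal (1 / L) * μ (A k) := setLIntegral_const _ _
      _ ≤ ENNReal.ofReal (1 / L) * ENNReal.ofReal (Cl * L) := by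
          gcongr
          calc μ (A k) ≤ μ (ball x (2 ^ (k + 1) * h)) := measure_mono Set.diff_subset
            _ ≤ ENNReal.ofReal (lam x (2 ^ (k + 1) * h)) := hdom x _ (by positivity)
            _ ≤ ENNReal.ofReal (Cl * L) := by
                apply ENNReal.ofReal_le_ofReal
                have : (2 : ℝ) ^ (k + 1) * h = 2 * (2 ^ k * h) := by ring
                rw [this]
                exact hdoub x _ hrk
      _ = ENNReal.ofReal (1 / L * (Cl * L)) :=
          (ENNReal.ofReal_mul (one_div_pos.2 hLpos).le).symm
      _ = ENNReal.ofReal Cl := by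
          congr 1; field_simp
  -- assemble
  have hmain : ∫⁻ y in S, ENNReal.ofReal (min (1 / lam x (dist x y)) (1 / lam y (dist x y))) ∂μ ≤
      (N : ENNReal) * ENNReal.ofReal Cl := by
    calc ∫⁻ y in S, ENNReal.ofReal (min (1 / lam x (dist x y)) (1 / lam y (dist x y))) ∂μ
        ≤ ∫⁻ y in ⋃ k : Fin N, A k,
            ENNReal.ofReal (min (1 / lam x (dist x y)) (1 / lam y (dist x y))) ∂μ :=
          lintegral_mono_set hcover
      _ ≤ ∑' k : Fin N, ∫⁻ y in A k,
            ENNReal.ofReal (min (1 / lam x (dist x y)) (1 / lam y (dist x y))) ∂μ :=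
          lintegral_iUnion_le _ _
      _ ≤ ∑' _ : Fin N, ENNReal.ofReal Cl := ENNReal.tsum_le_tsum (fun k => hterm k)
      _ = (N : ENNReal) * ENNReal.ofReal Cl := by
          rw [tsum_fintype]
          simp [Finset.sum_const, nsmul_eq_mul]
  refine hmain.trans ?_
  -- numeric: N * Cl ≤ Cl (1/log2 + 1) * log (10 r / h)
  have hLlog : Real.log 4 ≤ Real.log (5 * r / h) :=
    Real.log_le_log (by norm_num) (le_of_lt ht0)
  have hlog4 : (1 : ℝ) < Real.log 4 := by
    rw [Real.lt_log_iff_exp_lt (by norm_num)]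
    calc Real.exp 1 < 2.7182818286 := Real.exp_one_lt_d9
      _ < 4 := by norm_num
  have h5le10 : Real.log (5 * r / h) ≤ Real.log (10 * r / h) := by
    apply Real.log_le_log (by positivity)
    gcongr
    norm_num
  set Lg : ℝ := Real.log (10 * r / h) with hLg
  have h1le : (1 : ℝ) ≤ Real.log (5 * r / h) := le_trans hlog4.le hLlog
  have hLg1 : (1 : ℝ) ≤ Lg := le_trans h1le h5le10
  have hClpos : (0 : ℝ) < Cl := lt_of_lt_of_le one_pos hCl
  have hNle : (N : ℝ) ≤ (1 / Real.log 2 + 1) * Lg := by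
    have hceil : (N : ℝ) < Real.logb 2 (5 * r / h) + 1 :=
      Nat.ceil_lt_add_one (Real.logb_nonneg one_lt_two (by linarith))
    have hlogb : Real.logb 2 (5 * r / h) = Real.log (5 * r / h) / Real.log 2 := rfl
    have e1 : Real.log (5 * r / h) / Real.log 2 ≤ Lg / Real.log 2 := by gcongr
    have e3 : (1 / Real.log 2 + 1) * Lg = Lg / Real.log 2 + Lg := by ring
    rw [hlogb] at hceil
    linarith
  have hfinal : (N : ℝ) * Cl ≤ Cl * (1 / Real.log 2 + 1) * Lg := by
    calc (N : ℝ) * Cl = Cl * (N : ℝ) := mul_comm _ _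
      _ ≤ Cl * ((1 / Real.log 2 + 1) * Lg) := by
          exact mul_le_mul_of_nonneg_left hNle hClpos.le
      _ = Cl * (1 / Real.log 2 + 1) * Lg := by ring
  calc (N : ENNReal) * ENNReal.ofReal Cl
      = ENNReal.ofReal ((N : ℝ) * Cl) := by
        rw [ENNReal.ofReal_mul (Nat.cast_nonneg _), ENNReal.ofReal_natCast]
    _ ≤ ENNReal.ofReal (Cl * (1 / Real.log 2 + 1) * Lg) := ENNReal.ofReal_le_ofReal hfinal
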